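/- (Claim in Step ii of Section 2.1.) Let E be a finite index type and let P and G be real E×E matrices satisfying P·P = P, P·G = G and G·P = G. Then for every t ≥ 0: P·exp(t·G) = exp(t·G)·P = P − I + exp(t·G), where I denotes the identity matrix. -/

import Mathlib

open NormedSpace

lemma aux_proj_exp {𝔸 : Type*} [NormedRing 𝔸] [NormedAlgebra ℝ 𝔸] [CompleteSpace 𝔸]
    (a b : 𝔸) (hab : a * b = b) (hba : b * a = b) (haa : a * a = a) :
    a * exp b = exp b * a ∧ a * exp b = a - 1 + exp b := by
  have hcomm : Commute a b := hab.trans hba.symm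
  constructor
  · exact (hcomm.exp_right).eq
  · have key : (a - 1) * exp b = a - 1 := by
      rw [exp_eq_tsum ℝ]
      have hsum : Summable fun n : ℕ => (((n.factorial : ℝ))⁻¹) • b ^ n := expSeries_summable' b
      rw [← hsum.tsum_mul_left (a - 1)]
      have : ∀ n : ℕ, (a - 1) * ((((n.factorial : ℝ))⁻¹) • b ^ n)
          = if n = 0 then a - 1 else 0 := by
        intro n
        cases n with
        | zero => simp
        | succ k =>
          simp only [Nat.succ_ne_zero, if_false, mul_smul_comm]
          have : (a - 1) * b ^ (k + 1) = 0 := by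
            rw [pow_succ', ← mul_assoc, sub_mul, one_mul, hab, sub_self, zero_mul]
          rw [this, smul_zero]
      rw [tsum_congr this, tsum_ite_eq]
    rw [sub_mul, one_mul, sub_eq_iff_eq_add] at key
    exact key

theorem projection_mul_exp (E : Type*) [Fintype E] [DecidableEq E]
    (P G : Matrix E E ℝ) (hP : P * P = P) (hPG : P * G = G) (hGP : G * P = G)
    (t : ℝ) (ht : 0 ≤ t) :
    P * NormedSpace.exp (t • G) = NormedSpace.exp (t • G) * P ∧
      P * NormedSpace.exp (t • G) = P - 1 + NormedSpace.exp (t • G) := by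
  letI : NormedRing (Matrix E E ℝ) := Matrix.linftyOpNormedRing
  letI : NormedAlgebra ℝ (Matrix E E ℝ) := Matrix.linftyOpNormedAlgebra
  exact aux_proj_exp P (t • G) (by rw [mul_smul_comm, hPG]) (by rw [smul_mul_assoc, hGP]) hP
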